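/- Let A be a Q(q)-algebra and let x, y ∈ A satisfy the quantum Serre relation x² y − [2]_q x y x + y x² = 0, where [2]_q = q + q^{−1}. Then for each e ∈ {+1, −1} the higher-order (degree 3) Serre–Lusztig relation holds: ∑_{r+s=3} (−1)^r q^{−e r} x^{(r)} y x^{(s)} = 0, where x^{(k)} = x^k/[k]_q! is the usual divided power. -/

import Mathlib

noncomputable section

abbrev K : Type := RatFunc ℚ

/-- The indeterminate `q` in `ℚ(q)`. -/
def qq : K := RatFunc.X

/-- Balanced quantum integer at base `x`. -/
def qintx (x : K) (m : ℤ) : K := (x ^ m - x ^ (-m)) / (x - x⁻¹)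

/-- Balanced quantum integer `[m]_q`. -/
def qint (m : ℤ) : K := qintx qq m

/-- Quantum factorial at base `x`. -/
def qfactx (x : K) (m : ℕ) : K := ∏ j ∈ Finset.range m, qintx x ((j : ℤ) + 1)

/-- Quantum factorial `[m]_q!`. -/
def qfact (m : ℕ) : K := qfactx qq m

/-- Gaussian binomial coefficient at base `x` (zero when `r > m`). -/
def qbinomx (x : K) (m r : ℕ) : K :=
  if r ≤ m then qfactx x m / (qfactx x r * qfactx x (m - r)) else 0

/-- Gaussian binomial coefficient. -/
def qbinom (m r : ℕ) : K := qbinomx qq m r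

/-- The ı-divided powers `B^{(m)}_{p̄}` of `B` with central parameter `Z`,
given by the closed product formulas of the paper. -/
def iDP {A : Type*} [Ring A] [Algebra K A] (B Z : A) (p : ZMod 2) (m : ℕ) : A :=
  (qfact m)⁻¹ •
    ((if m % 2 = 1 then B else 1) *
      ((List.range (m / 2)).map (fun j =>
        B ^ 2 -
          ((qint (if p = 1 then 2 * (j : ℤ) + 1
                  else if m % 2 = 1 then 2 * (j : ℤ) + 2 else 2 * (j : ℤ))) ^ 2 * qq) • Z)).prod)

/-- The usual divided power `x^{(k)} = x^k/[k]_q!`. -/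
def dp {A : Type*} [Ring A] [Algebra K A] (x : A) (k : ℕ) : A := (qfact k)⁻¹ • x ^ k

lemma hX : qq ≠ 0 := RatFunc.X_ne_zero

lemma hsq : qq ^ 2 - 1 ≠ 0 := by
  have h : (qq ^ 2 - 1 : K) = algebraMap (Polynomial ℚ) K (Polynomial.X ^ 2 - 1) := by
    simp only [qq, RatFunc.X, map_sub, map_pow, map_one]
  rw [h]
  apply RatFunc.algebraMap_ne_zero
  intro hc
  have := congrArg (Polynomial.eval 2) hc
  norm_num at this

lemma hden : qq - qq⁻¹ ≠ 0 := by
  intro hc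
  apply hsq
  rw [show qq ^ 2 - 1 = qq * (qq - qq⁻¹) by field_simp [hX], hc, mul_zero]

lemma hq1 : qint 1 = 1 := by
  unfold qint qintx
  rw [show ((1:ℤ)) = ((1:ℕ):ℤ) by norm_num, zpow_natCast, zpow_neg, zpow_natCast]
  rw [pow_one]
  exact div_self hden

lemma hq2 : qint 2 = qq + qq⁻¹ := by
  unfold qint qintx
  rw [show ((2:ℤ)) = ((2:ℕ):ℤ) by norm_num, zpow_natCast, zpow_neg, zpow_natCast]
  rw [div_eq_iff hden]
  field_simp [hX]
  ring

lemma hq3 : qint 3 = qq ^ 2 + 1 + (qq ^ 2)⁻¹ := by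
  unfold qint qintx
  rw [show ((3:ℤ)) = ((3:ℕ):ℤ) by norm_num, zpow_natCast, zpow_neg, zpow_natCast]
  rw [div_eq_iff hden]
  field_simp [hX]
  ring

lemma hf2 : qfact 2 = qint 2 := by
  unfold qfact qfactx
  rw [Finset.prod_range_succ, Finset.prod_range_one]
  norm_num
  rw [show qintx qq 1 = (1:K) from hq1, one_mul]
  rfl

lemma hf3 : qfact 3 = qint 2 * qint 3 := by
  unfold qfact qfactx
  rw [Finset.prod_range_succ, show (∏ j ∈ Finset.range 2, qintx qq ((j:ℤ)+1)) = qfact 2 from rfl, hf2]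
  norm_num
  exact Or.inl rfl

lemma poly_ne {p : Polynomial ℚ} (hp : Polynomial.eval 1 p ≠ 0) :
    algebraMap (Polynomial ℚ) K p ≠ 0 := by
  apply RatFunc.algebraMap_ne_zero
  intro hc; rw [hc] at hp; simp at hp

lemma hne2 : qq + qq⁻¹ ≠ 0 := by
  have h : qq + qq⁻¹ = algebraMap (Polynomial ℚ) K (Polynomial.X ^ 2 + 1) / qq := by
    field_simp [hX]
    simp only [qq, RatFunc.X, map_add, map_pow, map_one]
  rw [h]
  exact div_ne_zero (poly_ne (by norm_num)) hX

lemma hne3 : qq ^ 2 + 1 + (qq ^ 2)⁻¹ ≠ 0 := by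
  have h : qq ^ 2 + 1 + (qq ^ 2)⁻¹
      = algebraMap (Polynomial ℚ) K (Polynomial.X ^ 4 + Polynomial.X ^ 2 + 1) / qq ^ 2 := by
    field_simp [hX]
    simp only [qq, RatFunc.X, map_add, map_pow, map_one]
    ring
  rw [h]
  exact div_ne_zero (poly_ne (by norm_num)) (pow_ne_zero 2 hX)

lemma hp2 : (qq ^ 2 + 1 : K) ≠ 0 := by
  have h : (qq ^ 2 + 1 : K) = algebraMap (Polynomial ℚ) K (Polynomial.X ^ 2 + 1) := by
    simp only [qq, RatFunc.X, map_add, map_pow, map_one]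
  rw [h]; exact poly_ne (by norm_num)

lemma hp3 : (qq ^ 4 + qq ^ 2 + 1 : K) ≠ 0 := by
  have h : (qq ^ 4 + qq ^ 2 + 1 : K)
      = algebraMap (Polynomial ℚ) K (Polynomial.X ^ 4 + Polynomial.X ^ 2 + 1) := by
    simp only [qq, RatFunc.X, map_add, map_pow, map_one]
  rw [h]; exact poly_ne (by norm_num)

lemma hN2 : qq + qq⁻¹ = (qq ^ 2 + 1) / qq := by
  field_simp [hX]

lemma hN3 : qq ^ 2 + 1 + (qq ^ 2)⁻¹ = (qq ^ 4 + qq ^ 2 + 1) / qq ^ 2 := by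
  field_simp [hX]

lemma hf0 : qfact 0 = 1 := by
  unfold qfact qfactx; simp

lemma hf1 : qfact 1 = 1 := by
  unfold qfact qfactx
  rw [Finset.prod_range_one]
  norm_num
  exact hq1


set_option maxHeartbeats 1000000 in
theorem stmt5 {A : Type*} [Ring A] [Algebra K A] (x y : A)
    (h : x ^ 2 * y - qint 2 • (x * y * x) + y * x ^ 2 = 0)
    (e : ℤ) (he : e = 1 ∨ e = -1) :
    ∑ r ∈ Finset.range 4,
      ((-1 : K) ^ r * qq ^ (-(e * (r : ℤ)))) • (dp x r * y * dp x (3 - r)) = 0 := by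
  have h2 : y * x ^ 2 = qint 2 • (x * y * x) - x ^ 2 * y := by
    have h0 : y * x ^ 2 - (qint 2 • (x * y * x) - x ^ 2 * y) = 0 := by rw [← h]; abel
    exact sub_eq_zero.mp h0
  have h2x : x ^ 2 * y = qint 2 • (x * y * x) - y * x ^ 2 := by
    have h0 : x ^ 2 * y - (qint 2 • (x * y * x) - y * x ^ 2) = 0 := by rw [← h]; abel
    exact sub_eq_zero.mp h0
  have hyx3 : y * x ^ 3 = qint 2 • (x * y * x ^ 2) - x ^ 2 * y * x := by
    rw [show y * x ^ 3 = y * x ^ 2 * x by noncomm_ring, h2, sub_mul, smul_mul_assoc,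
      show x * y * x * x = x * y * x ^ 2 by noncomm_ring]
  have hx3y : x ^ 3 * y = qint 2 • (x ^ 2 * y * x) - x * y * x ^ 2 := by
    have e1 : x ^ 3 * y - (qint 2 • (x ^ 2 * y * x) - x * y * x ^ 2)
        = x * (x ^ 2 * y - qint 2 • (x * y * x) + y * x ^ 2) := by
      rw [mul_add, mul_sub, mul_smul_comm,
        show x * (x ^ 2 * y) = x ^ 3 * y by noncomm_ring,
        show x * (x * y * x) = x ^ 2 * y * x by noncomm_ring,
        show x * (y * x ^ 2) = x * y * x ^ 2 by noncomm_ring]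
      abel
    exact sub_eq_zero.mp (by rw [e1, h, mul_zero])
  rw [Finset.sum_range_succ, Finset.sum_range_succ, Finset.sum_range_succ,
    Finset.sum_range_one]
  simp only [dp, hf0, hf1]
  norm_num
  rw [hyx3, hx3y]
  rcases he with rfl | rfl
  · norm_num
    rw [hf0, hf1]
    have key : (qfact 3)⁻¹ • (qint 2 • (x * y * x ^ 2) - x ^ 2 * y * x) +
          -(qq⁻¹ • (qfact 2)⁻¹ • (x * y * x ^ 2)) +
          (qq ^ 2)⁻¹ • (1:K)⁻¹ • (qfact 2)⁻¹ • (x ^ 2 * y * x) +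
          -((qq ^ 3)⁻¹ • (1:K)⁻¹ • (qfact 3)⁻¹ • (qint 2 • (x ^ 2 * y * x) - x * y * x ^ 2)) =
        ((qfact 3)⁻¹ * qint 2 - qq⁻¹ * (qfact 2)⁻¹ + (qq ^ 3)⁻¹ * (qfact 3)⁻¹) • (x * y * x ^ 2) +
        (-(qfact 3)⁻¹ + (qq ^ 2)⁻¹ * (qfact 2)⁻¹ - (qq ^ 3)⁻¹ * ((qfact 3)⁻¹ * qint 2)) • (x ^ 2 * y * x) := by
      simp only [smul_sub, smul_smul, sub_smul, add_smul, neg_smul, inv_one, one_mul]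
      ring_nf
      abel
    have hc1 : (qfact 3)⁻¹ * qint 2 - qq⁻¹ * (qfact 2)⁻¹ + (qq ^ 3)⁻¹ * (qfact 3)⁻¹ = 0 := by
      rw [hf3, hf2, hq2, hq3, hN2, hN3]
      field_simp [hX, hp2, hp3]
      linear_combination mul_inv_cancel₀ (show (1 + qq ^ 2 + qq ^ 4 : K) ≠ 0 by rw [show (1 + qq ^ 2 + qq ^ 4 : K) = qq ^ 4 + qq ^ 2 + 1 by ring]; exact hp3)
    have hc2 : -(qfact 3)⁻¹ + (qq ^ 2)⁻¹ * (qfact 2)⁻¹ - (qq ^ 3)⁻¹ * ((qfact 3)⁻¹ * qint 2) = 0 := by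
      rw [hf3, hf2, hq2, hq3, hN2, hN3]
      field_simp [hX, hp2, hp3]
      linear_combination (-1 : K) * mul_inv_cancel₀ (show (1 + qq ^ 2 + qq ^ 4 : K) ≠ 0 by rw [show (1 + qq ^ 2 + qq ^ 4 : K) = qq ^ 4 + qq ^ 2 + 1 by ring]; exact hp3)
    exact key.trans (by rw [hc1, hc2, zero_smul, zero_smul, add_zero])
  · norm_num
    rw [hf0, hf1]
    have key : (qfact 3)⁻¹ • (qint 2 • (x * y * x ^ 2) - x ^ 2 * y * x) +
          -(qq • (qfact 2)⁻¹ • (x * y * x ^ 2)) +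
          qq ^ 2 • (1:K)⁻¹ • (qfact 2)⁻¹ • (x ^ 2 * y * x) +
          -(qq ^ 3 • (1:K)⁻¹ • (qfact 3)⁻¹ • (qint 2 • (x ^ 2 * y * x) - x * y * x ^ 2)) =
        ((qfact 3)⁻¹ * qint 2 - qq * (qfact 2)⁻¹ + qq ^ 3 * (qfact 3)⁻¹) • (x * y * x ^ 2) +
        (-(qfact 3)⁻¹ + qq ^ 2 * (qfact 2)⁻¹ - qq ^ 3 * ((qfact 3)⁻¹ * qint 2)) • (x ^ 2 * y * x) := by
      simp only [smul_sub, smul_smul, sub_smul, add_smul, neg_smul, inv_one, one_mul]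
      ring_nf
      abel
    have hc1 : (qfact 3)⁻¹ * qint 2 - qq * (qfact 2)⁻¹ + qq ^ 3 * (qfact 3)⁻¹ = 0 := by
      rw [hf3, hf2, hq2, hq3, hN2, hN3]
      field_simp [hX, hp2, hp3]
      linear_combination qq ^ 2 * mul_inv_cancel₀ (show (1 + qq ^ 2 + qq ^ 4 : K) ≠ 0 by rw [show (1 + qq ^ 2 + qq ^ 4 : K) = qq ^ 4 + qq ^ 2 + 1 by ring]; exact hp3)
    have hc2 : -(qfact 3)⁻¹ + qq ^ 2 * (qfact 2)⁻¹ - qq ^ 3 * ((qfact 3)⁻¹ * qint 2) = 0 := by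
      rw [hf3, hf2, hq2, hq3, hN2, hN3]
      field_simp [hX, hp2, hp3]
      linear_combination -qq ^ 3 * mul_inv_cancel₀ (show (1 + qq ^ 2 + qq ^ 4 : K) ≠ 0 by rw [show (1 + qq ^ 2 + qq ^ 4 : K) = qq ^ 4 + qq ^ 2 + 1 by ring]; exact hp3)
    exact key.trans (by rw [hc1, hc2, zero_smul, zero_smul, add_zero])
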